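/- The Cherednik–Dunkl operators d_i(β) = β^{-1} z_i ∂/∂z_i + (n−i) + Σ_{j>i} θ_{ji}(K_{ij}−1) − Σ_{j<i} θ_{ij}(K_{ij}−1), acting on Laurent polynomials in z_1,…,z_n, pairwise commute: d_i(β) d_j(β) = d_j(β) d_i(β) for all i, j. -/

import Mathlib

noncomputable section

/-- The ring of Laurent polynomials `ℂ[z_1^{±1},…,z_n^{±1}]`, as the monoid algebra of
`Fin n → ℤ` over `ℂ`. -/
abbrev Lpoly (n : ℕ) := AddMonoidAlgebra ℂ (Fin n → ℤ)

/-- The Laurent monomial `z^m`. -/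
def mono {n : ℕ} (m : Fin n → ℤ) : Lpoly n := AddMonoidAlgebra.single m 1

/-- The Euler operator `D_i = z_i ∂/∂z_i`, acting on monomials by `z^m ↦ m_i z^m`. -/
def Dop {n : ℕ} (i : Fin n) : Lpoly n →ₗ[ℂ] Lpoly n :=
  (Finsupp.lsum ℂ fun m => LinearMap.toSpanSingleton ℂ (Lpoly n) (((m i : ℂ)) • mono m)) ∘ₗ
    (AddMonoidAlgebra.coeffLinearEquiv ℂ).toLinearMap

/-- The coordinate permutation operator `K_{ij}`, permuting the variables `z_i, z_j`. -/
def Kop {n : ℕ} (i j : Fin n) : Lpoly n →ₗ[ℂ] Lpoly n :=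
  AddMonoidAlgebra.mapDomainLinearMap ℂ ℂ (fun m : Fin n → ℤ => m ∘ Equiv.swap i j)

/-- The Cherednik–Dunkl operator
`d_i(β) = β⁻¹ D_i + (n−i) + Σ_{j>i} θ_{ji}(K_{ij}−1) − Σ_{j<i} θ_{ij}(K_{ij}−1)`
(0-indexed: the constant is `n − i − 1` for `i : Fin n`), where
`θ i j : Lpoly n →ₗ[ℂ] Lpoly n` is the divided-difference operator
`z_i (K_{ij} − 1)/(z_i − z_j)`, given as a parameter characterized by the identity
`(z_i − z_j) · (θ i j f) = z_i · (K_{ij} f − f)`. -/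
def CDop {n : ℕ} (β : ℂ) (θ : Fin n → Fin n → (Lpoly n →ₗ[ℂ] Lpoly n)) (i : Fin n) :
    Lpoly n →ₗ[ℂ] Lpoly n :=
  β⁻¹ • Dop i + (((n : ℂ) - (i : ℕ) - 1)) • (LinearMap.id : Lpoly n →ₗ[ℂ] Lpoly n)
    + ∑ j ∈ Finset.univ.filter (fun j => i < j), θ j i
    - ∑ j ∈ Finset.univ.filter (fun j => j < i), θ i j

section CDaux

variable {n : ℕ}
lemma Kop_mono (a b : Fin n) (m : Fin n → ℤ) :
    Kop a b (mono m) = mono (m ∘ Equiv.swap a b) := by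
  simp only [Kop, mono, AddMonoidAlgebra.mapDomainLinearMap_single]
lemma Dop_mono (i : Fin n) (m : Fin n → ℤ) :
    Dop i (mono m) = ((m i : ℂ)) • mono m := by
  simp [Dop, mono, LinearMap.toSpanSingleton_apply]

def Z (i : Fin n) : Lpoly n := mono (Pi.single i 1)

lemma mono_mul (a b : Fin n → ℤ) : mono a * mono b = mono (a+b) := by
  simp [mono, AddMonoidAlgebra.single_mul_single]

lemma Zsub_ne {i j : Fin n} (h : i ≠ j) : Z i - Z j ≠ 0 := by
  rw [sub_ne_zero]
  intro he
  have hm : (Pi.single i 1 : Fin n → ℤ) = Pi.single j 1 :=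
    AddMonoidAlgebra.single_left_injective (R := ℂ) one_ne_zero he
  have h2 := congrFun hm i
  rw [Pi.single_eq_same, Pi.single_eq_of_ne h] at h2
  exact one_ne_zero h2

lemma Kop_eq (a b : Fin n) (f : Lpoly n) :
    Kop a b f = AddMonoidAlgebra.mapDomain (fun m : Fin n → ℤ => m ∘ Equiv.swap a b) f := rfl

lemma Kop_mul (a b : Fin n) (f g : Lpoly n) :
    Kop a b (f * g) = Kop a b f * Kop a b g := by
  rw [Kop_eq, Kop_eq, Kop_eq]
  exact AddMonoidAlgebra.mapDomain_mul (AddMonoidHom.mk' (fun m => m ∘ Equiv.swap a b) (fun _ _ => rfl)) f g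

lemma Kop_Z (a b c : Fin n) : Kop a b (Z c) = Z (Equiv.swap a b c) := by
  rw [Z, Kop_mono]
  congr 1
  funext x
  rcases eq_or_ne x (Equiv.swap a b c) with h | h
  · subst h; rw [Function.comp_apply, Equiv.swap_apply_self, Pi.single_eq_same, Pi.single_eq_same]
  · rw [Function.comp_apply, Pi.single_eq_of_ne h, Pi.single_eq_of_ne]
    intro he
    exact h (by rw [← he, Equiv.swap_apply_self])

lemma Kop_symm (a b : Fin n) : Kop (n:=n) a b = Kop b a := by
  unfold Kop; rw [Equiv.swap_comm]

lemma Kop_Kop (a b c d : Fin n) (f : Lpoly n) :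
    Kop a b (Kop c d f) = Kop (Equiv.swap a b c) (Equiv.swap a b d) (Kop a b f) := by
  show (Kop a b ∘ₗ Kop c d) f = (Kop _ _ ∘ₗ Kop a b) f
  simp only [Kop, ← AddMonoidAlgebra.mapDomainLinearMap_comp]
  congr 2
  funext m x
  simp [Function.comp_apply, Equiv.swap_apply_apply, Equiv.swap_apply_self]


lemma single_eq_smul_mono (a : Fin n → ℤ) (c : ℂ) :
    (AddMonoidAlgebra.single a c : Lpoly n) = c • mono a := by
  simp [mono, AddMonoidAlgebra.smul_single]

lemma Dop_mono_mul (i : Fin n) (a b : Fin n → ℤ) :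
    Dop i (mono a * mono b) = Dop i (mono a) * mono b + mono a * Dop i (mono b) := by
  rw [mono_mul, Dop_mono, Dop_mono, Dop_mono, smul_mul_assoc, mul_smul_comm, mono_mul,
    ← add_smul]
  congr 1
  push_cast [Pi.add_apply]
  ring

lemma Dop_mul (i : Fin n) (f g : Lpoly n) :
    Dop i (f * g) = Dop i f * g + f * Dop i g := by
  induction f using AddMonoidAlgebra.induction_linear with
  | zero => simp
  | add p q hp hq =>
      rw [add_mul, map_add, hp, hq, map_add, add_mul]; ring
  | single a c =>
      induction g using AddMonoidAlgebra.induction_linear with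
      | zero => simp
      | add p q hp hq =>
          rw [mul_add, map_add, hp, hq, map_add, mul_add]; ring
      | single b d =>
          rw [single_eq_smul_mono, single_eq_smul_mono, smul_mul_smul_comm, map_smul, map_smul,
            map_smul, Dop_mono_mul, smul_add, smul_mul_assoc, mul_smul_comm, smul_mul_assoc,
            mul_smul_comm, smul_smul, smul_smul]

lemma Dop_Kop (p a b : Fin n) (f : Lpoly n) :
    Dop p (Kop a b f) = Kop a b (Dop (Equiv.swap a b p) f) := by
  induction f using AddMonoidAlgebra.induction_linear with
  | zero => simp
  | add g h hg hh => rw [map_add, map_add, hg, hh, map_add, map_add]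
  | single m c =>
      rw [single_eq_smul_mono, map_smul, map_smul, map_smul, map_smul, Kop_mono, Dop_mono,
        Dop_mono, map_smul, Kop_mono]
      rfl

lemma Dop_Dop (i j : Fin n) (f : Lpoly n) : Dop i (Dop j f) = Dop j (Dop i f) := by
  induction f using AddMonoidAlgebra.induction_linear with
  | zero => simp
  | add g h hg hh => rw [map_add, map_add, hg, hh, map_add, map_add]
  | single m c =>
      simp only [single_eq_smul_mono, map_smul, Dop_mono, smul_smul]
      ring_nf

lemma Dop_Z_same (p : Fin n) : Dop p (Z p) = Z p := by
  rw [Z, Dop_mono, Pi.single_eq_same]; simp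

lemma Dop_Z_ne {p q : Fin n} (h : p ≠ q) : Dop p (Z q) = 0 := by
  rw [Z, Dop_mono, Pi.single_eq_of_ne h]; simp

-- theta section, appended to base
section Theta
variable (θ : Fin n → Fin n → (Lpoly n →ₗ[ℂ] Lpoly n))
variable (hθ : ∀ i j : Fin n, i ≠ j → ∀ f : Lpoly n,
      (Z i - Z j) * θ i j f = Z i * (Kop i j f - f))

lemma cancel {p u v : Lpoly n} (hp : p ≠ 0) (h : p * u = p * v) : u = v := by
  have h2 : p * (u - v) = 0 := by rw [mul_sub, h, sub_self]
  rcases mul_eq_zero.mp h2 with h3 | h3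
  · exact absurd h3 hp
  · exact sub_eq_zero.mp h3

include hθ

lemma thK (a b c d : Fin n) (hab : a ≠ b) (hcd : c ≠ d) (f : Lpoly n) :
    Kop a b (θ c d f) = θ (Equiv.swap a b c) (Equiv.swap a b d) (Kop a b f) := by
  have hcd' : Equiv.swap a b c ≠ Equiv.swap a b d := fun h => hcd ((Equiv.swap a b).injective h)
  apply cancel (Zsub_ne hcd')
  calc (Z (Equiv.swap a b c) - Z (Equiv.swap a b d)) * Kop a b (θ c d f)
      = Kop a b ((Z c - Z d) * θ c d f) := by rw [Kop_mul, map_sub, Kop_Z, Kop_Z]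
    _ = Kop a b (Z c * (Kop c d f - f)) := by rw [hθ c d hcd f]
    _ = Z (Equiv.swap a b c) * (Kop (Equiv.swap a b c) (Equiv.swap a b d) (Kop a b f) - Kop a b f) := by
        rw [Kop_mul, map_sub, Kop_Z, Kop_Kop]
    _ = (Z (Equiv.swap a b c) - Z (Equiv.swap a b d)) *
          θ (Equiv.swap a b c) (Equiv.swap a b d) (Kop a b f) := (hθ _ _ hcd' _).symm

lemma thD (p a b : Fin n) (hab : a ≠ b) (hpa : p ≠ a) (hpb : p ≠ b) (f : Lpoly n) :
    Dop p (θ a b f) = θ a b (Dop p f) := by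
  apply cancel (Zsub_ne hab)
  have hA : Dop p ((Z a - Z b) * θ a b f) = (Z a - Z b) * Dop p (θ a b f) := by
    rw [Dop_mul, map_sub, Dop_Z_ne hpa, Dop_Z_ne hpb]; ring
  have hB : Dop p (Z a * (Kop a b f - f)) = Z a * (Kop a b (Dop p f) - Dop p f) := by
    rw [Dop_mul, Dop_Z_ne hpa, map_sub, Dop_Kop, Equiv.swap_apply_of_ne_of_ne hpa hpb]; ring
  have hC := congrArg (Dop p) (hθ a b hab f)
  have hD := hθ a b hab (Dop p f)
  linear_combination -hA + hC + hB - hD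

lemma thDD (a b : Fin n) (hab : a ≠ b) (f : Lpoly n) :
    Dop a (θ a b f) + Dop b (θ a b f) = θ a b (Dop a f) + θ a b (Dop b f) := by
  apply cancel (Zsub_ne hab)
  have hA : Dop a ((Z a - Z b) * θ a b f) = Z a * θ a b f + (Z a - Z b) * Dop a (θ a b f) := by
    rw [Dop_mul, map_sub, Dop_Z_same, Dop_Z_ne hab]; ring
  have hA' : Dop b ((Z a - Z b) * θ a b f) = -(Z b * θ a b f) + (Z a - Z b) * Dop b (θ a b f) := by
    rw [Dop_mul, map_sub, Dop_Z_same, Dop_Z_ne hab.symm]; ring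
  have hB : Dop a (Z a * (Kop a b f - f)) =
      Z a * (Kop a b f - f) + Z a * (Kop a b (Dop b f) - Dop a f) := by
    rw [Dop_mul, Dop_Z_same, map_sub, Dop_Kop, Equiv.swap_apply_left]
    try ring
  have hB' : Dop b (Z a * (Kop a b f - f)) = Z a * (Kop a b (Dop a f) - Dop b f) := by
    rw [Dop_mul, Dop_Z_ne hab.symm, map_sub, Dop_Kop, Equiv.swap_apply_right]
    try ring
  have hC := congrArg (Dop a) (hθ a b hab f)
  have hC' := congrArg (Dop b) (hθ a b hab f)
  have hD := hθ a b hab (Dop a f)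
  have hD' := hθ a b hab (Dop b f)
  have hF := hθ a b hab f
  linear_combination -hA - hA' + hC + hC' + hB + hB' - hD - hD' - hF

lemma thdisj (a b c d : Fin n) (hab : a ≠ b) (hcd : c ≠ d)
    (hac : a ≠ c) (had : a ≠ d) (hbc : b ≠ c) (hbd : b ≠ d) (f : Lpoly n) :
    θ a b (θ c d f) = θ c d (θ a b f) := by
  apply cancel (mul_ne_zero (Zsub_ne hab) (Zsub_ne hcd))
  have h1 := hθ a b hab (θ c d f)
  rw [thK θ hθ a b c d hab hcd f, Equiv.swap_apply_of_ne_of_ne hac.symm hbc.symm,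
    Equiv.swap_apply_of_ne_of_ne had.symm hbd.symm] at h1
  have h1' := hθ c d hcd (θ a b f)
  rw [thK θ hθ c d a b hcd hab f, Equiv.swap_apply_of_ne_of_ne hac had,
    Equiv.swap_apply_of_ne_of_ne hbc hbd] at h1'
  have h2 := hθ c d hcd (Kop a b f - f)
  have h2' := hθ a b hab (Kop c d f - f)
  simp only [map_sub] at h2 h2'
  have hKK : Kop c d (Kop a b f) = Kop a b (Kop c d f) := by
    rw [Kop_Kop c d a b f, Equiv.swap_apply_of_ne_of_ne hac had,
      Equiv.swap_apply_of_ne_of_ne hbc hbd]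
  linear_combination (Z c - Z d) * h1 + Z a * h2 - (Z a - Z b) * h1' - Z c * h2'
    + Z a * Z c * hKK

lemma I2ptw (i j k : Fin n) (hij : i ≠ j) (hik : i ≠ k) (hjk : j ≠ k) (f : Lpoly n) :
    θ j i (θ j k f) - θ j k (θ j i f) + θ k i (θ j i f) - θ j i (θ k i f)
      + θ k i (θ j k f) - θ j k (θ k i f) = 0 := by
  have hji := hij.symm; have hki := hik.symm; have hkj := hjk.symm
  have d1 : Kop i k (Kop j i f) = Kop j i (Kop j k f) := by
    calc Kop i k (Kop j i f)
        = Kop (Equiv.swap i k j) (Equiv.swap i k i) (Kop i k f) := Kop_Kop i k j i f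
      _ = Kop j k (Kop i k f) := by rw [Equiv.swap_apply_of_ne_of_ne hji hjk, Equiv.swap_apply_left]
      _ = Kop (Equiv.swap j k i) (Equiv.swap j k k) (Kop j k f) := Kop_Kop j k i k f
      _ = Kop i j (Kop j k f) := by rw [Equiv.swap_apply_of_ne_of_ne hij hik, Equiv.swap_apply_right]
      _ = Kop j i (Kop j k f) := by rw [Kop_symm]
  have d2 : Kop k i (Kop j k f) = Kop j i (Kop k i f) := by
    calc Kop k i (Kop j k f)
        = Kop (Equiv.swap k i j) (Equiv.swap k i k) (Kop k i f) := Kop_Kop k i j k f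
      _ = Kop j i (Kop k i f) := by rw [Equiv.swap_apply_of_ne_of_ne hjk hji, Equiv.swap_apply_left]
  have d3 : Kop j k (Kop k i f) = Kop j i (Kop j k f) := by
    calc Kop j k (Kop k i f)
        = Kop (Equiv.swap j k k) (Equiv.swap j k i) (Kop j k f) := Kop_Kop j k k i f
      _ = Kop j i (Kop j k f) := by rw [Equiv.swap_apply_right, Equiv.swap_apply_of_ne_of_ne hij hik]
  have d4 : Kop k j (Kop j i f) = Kop j i (Kop k i f) := by
    calc Kop k j (Kop j i f)
        = Kop (Equiv.swap k j j) (Equiv.swap k j i) (Kop k j f) := Kop_Kop k j j i f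
      _ = Kop k i (Kop k j f) := by rw [Equiv.swap_apply_right, Equiv.swap_apply_of_ne_of_ne hik hij]
      _ = Kop (Equiv.swap k i k) (Equiv.swap k i j) (Kop k i f) := Kop_Kop k i k j f
      _ = Kop i j (Kop k i f) := by rw [Equiv.swap_apply_left, Equiv.swap_apply_of_ne_of_ne hjk hji]
      _ = Kop j i (Kop k i f) := by rw [Kop_symm]
  have e1 := hθ j i hji (θ j k f)
  rw [thK θ hθ j i j k hji hjk f, Equiv.swap_apply_left,
    Equiv.swap_apply_of_ne_of_ne hkj hki] at e1
  have e2 := hθ j k hjk (θ j i f)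
  rw [thK θ hθ j k j i hjk hji f, Equiv.swap_apply_left,
    Equiv.swap_apply_of_ne_of_ne hij hik] at e2
  have e3 := hθ k i hki (θ j i f)
  rw [thK θ hθ k i j i hki hji f, Equiv.swap_apply_of_ne_of_ne hjk hji,
    Equiv.swap_apply_right] at e3
  have e4 := hθ j i hji (θ k i f)
  rw [thK θ hθ j i k i hji hki f, Equiv.swap_apply_of_ne_of_ne hkj hki,
    Equiv.swap_apply_right] at e4
  have e5 := hθ k i hki (θ j k f)
  rw [thK θ hθ k i j k hki hjk f, Equiv.swap_apply_of_ne_of_ne hjk hji,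
    Equiv.swap_apply_left] at e5
  have e6 := hθ j k hjk (θ k i f)
  rw [thK θ hθ j k k i hjk hki f, Equiv.swap_apply_right,
    Equiv.swap_apply_of_ne_of_ne hij hik] at e6
  have h21 := hθ i k hik (Kop j i f); rw [d1] at h21
  have h22 := hθ k i hki (Kop j k f); rw [d2] at h22
  have h23 := hθ j k hjk (Kop k i f); rw [d3] at h23
  have h24 := hθ k j hkj (Kop j i f); rw [d4] at h24
  have h25 := hθ j i hji (Kop k i f)
  have h26 := hθ j i hji (Kop j k f)
  have g1 := hθ j k hjk f
  have g2 := hθ j i hji f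
  have g3 := hθ k i hki f
  apply cancel (mul_ne_zero (Zsub_ne hij) (mul_ne_zero (Zsub_ne hik) (Zsub_ne hjk)))
  linear_combination
    (-((Z i - Z k)*(Z j - Z k)))*e1 - (Z j - Z k)*Z j*h21 + (Z i - Z k)*Z j*g1
    - ((Z k - Z i)*(Z j - Z i))*e2 - (Z j - Z i)*Z j*h22 + (Z k - Z i)*Z j*g2
    + ((Z j - Z k)*(Z j - Z i))*e3 + (Z j - Z i)*Z k*h23 - (Z j - Z k)*Z k*g2
    + ((Z k - Z j)*(Z k - Z i))*e4 + (Z k - Z i)*Z j*h24 - (Z k - Z j)*Z j*g3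
    + ((Z j - Z i)*(Z j - Z k))*e5 + (Z j - Z k)*Z k*h25 - (Z j - Z i)*Z k*g1
    - ((Z j - Z i)*(Z k - Z i))*e6 - (Z k - Z i)*Z j*h26 + (Z j - Z i)*Z j*g3

def etaop (θ : Fin n → Fin n → (Lpoly n →ₗ[ℂ] Lpoly n)) (a b : Fin n) :
    Lpoly n →ₗ[ℂ] Lpoly n :=
  if a < b then θ b a else if b < a then -θ a b else 0

lemma eta_anti (a b : Fin n) : etaop θ b a = - etaop θ a b := by
  rcases lt_trichotomy a b with h|h|h
  · simp [etaop, h, h.asymm]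
  · subst h; simp [etaop]
  · simp [etaop, h, h.asymm]

include hθ

lemma comm_D_eta (p a b : Fin n) (hpa : p ≠ a) (hpb : p ≠ b) :
    Dop p * etaop θ a b = etaop θ a b * Dop p := by
  rcases lt_trichotomy a b with h|h|h
  · simp only [etaop, if_pos h]
    exact LinearMap.ext fun f => thD θ hθ p b a (h.ne') hpb hpa f
  · subst h; simp [etaop]
  · simp only [etaop, if_neg h.asymm, if_pos h]
    refine LinearMap.ext fun f => ?_
    simp only [Module.End.mul_apply, LinearMap.neg_apply, map_neg]
    linear_combination -(thD θ hθ p a b (h.ne') hpa hpb f)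

lemma comm_DD_eta (a b : Fin n) (hab : a ≠ b) :
    (Dop a + Dop b) * etaop θ a b = etaop θ a b * (Dop a + Dop b) := by
  rcases lt_trichotomy a b with h|h|h
  · simp only [etaop, if_pos h]
    refine LinearMap.ext fun f => ?_
    simp only [Module.End.mul_apply, LinearMap.add_apply, map_add]
    linear_combination thDD θ hθ b a h.ne' f
  · subst h; simp [etaop]
  · simp only [etaop, if_neg h.asymm, if_pos h]
    refine LinearMap.ext fun f => ?_
    simp only [Module.End.mul_apply, LinearMap.add_apply, LinearMap.neg_apply, map_add, map_neg]
    linear_combination -(thDD θ hθ a b h.ne' f)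

lemma comm_eta_disjoint (a b c d : Fin n) (hac : a ≠ c) (had : a ≠ d) (hbc : b ≠ c)
    (hbd : b ≠ d) : etaop θ a b * etaop θ c d = etaop θ c d * etaop θ a b := by
  rcases lt_trichotomy a b with h1|h1|h1 <;> rcases lt_trichotomy c d with h2|h2|h2
  · simp only [etaop, if_pos h1, if_pos h2]
    exact LinearMap.ext fun f => thdisj θ hθ b a d c h1.ne' h2.ne' hbd hbc had hac f
  · subst h2; simp [etaop]
  · simp only [etaop, if_pos h1, if_neg h2.asymm, if_pos h2]
    refine LinearMap.ext fun f => ?_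
    simp only [Module.End.mul_apply, LinearMap.neg_apply, map_neg]
    linear_combination -(thdisj θ hθ b a c d h1.ne' h2.ne' hbc hbd hac had f)
  · subst h1; simp [etaop]
  · subst h1; simp [etaop]
  · subst h1; simp [etaop]
  · simp only [etaop, if_neg h1.asymm, if_pos h1, if_pos h2]
    refine LinearMap.ext fun f => ?_
    simp only [Module.End.mul_apply, LinearMap.neg_apply, map_neg]
    linear_combination -(thdisj θ hθ a b d c h1.ne' h2.ne' had hac hbd hbc f)
  · subst h2; simp [etaop]
  · simp only [etaop, if_neg h1.asymm, if_pos h1, if_neg h2.asymm, if_pos h2]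
    refine LinearMap.ext fun f => ?_
    simp only [Module.End.mul_apply, LinearMap.neg_apply, map_neg, neg_neg]
    linear_combination thdisj θ hθ a b c d h1.ne' h2.ne' hac had hbc hbd f

lemma eta_triple (i j k : Fin n) (hij : i < j) (hik : i ≠ k) (hjk : j ≠ k) :
    etaop θ i j * etaop θ j k - etaop θ j k * etaop θ i j
    + (etaop θ i k * etaop θ j i - etaop θ j i * etaop θ i k)
    + (etaop θ i k * etaop θ j k - etaop θ j k * etaop θ i k) = 0 := by
  have hki := hik.symm; have hkj := hjk.symm
  rcases lt_trichotomy k i with h|h|h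
  · -- k < i < j
    have hkj' : k < j := h.trans hij
    simp only [etaop, if_pos hij, if_pos h, if_pos hkj', if_neg hij.asymm, if_neg h.asymm,
      if_neg hkj'.asymm]
    refine LinearMap.ext fun f => ?_
    simp only [LinearMap.sub_apply, LinearMap.add_apply, Module.End.mul_apply,
      LinearMap.neg_apply, LinearMap.zero_apply, map_neg, map_sub, map_add]
    linear_combination I2ptw θ hθ k j i hjk.symm hik.symm hij.ne' f
  · exact absurd h.symm hik
  · rcases lt_trichotomy k j with h2|h2|h2
    · -- i < k < j
      simp only [etaop, if_pos hij, if_pos h, if_pos h2, if_neg hij.asymm, if_neg h.asymm,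
        if_neg h2.asymm]
      refine LinearMap.ext fun f => ?_
      simp only [LinearMap.sub_apply, LinearMap.add_apply, Module.End.mul_apply,
        LinearMap.neg_apply, LinearMap.zero_apply, map_neg, map_sub, map_add]
      linear_combination -(I2ptw θ hθ i j k hij.ne hik hjk f)
    · exact absurd h2.symm hjk
    · -- i < j < k
      simp only [etaop, if_pos hij, if_pos h, if_pos h2, if_neg hij.asymm, if_neg h.asymm,
        if_neg h2.asymm]
      refine LinearMap.ext fun f => ?_
      simp only [LinearMap.sub_apply, LinearMap.add_apply, Module.End.mul_apply,
        LinearMap.neg_apply, LinearMap.zero_apply, map_neg, map_sub, map_add]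
      linear_combination I2ptw θ hθ i k j hik hij.ne hjk.symm f

def Hop (θ : Fin n → Fin n → (Lpoly n →ₗ[ℂ] Lpoly n)) (i : Fin n) :
    Lpoly n →ₗ[ℂ] Lpoly n :=
  ∑ k : Fin n, etaop θ i k

omit hθ in
lemma etaop_self (i : Fin n) : etaop θ i i = 0 := by simp [etaop]

lemma P2 (i j : Fin n) (hij : i ≠ j) :
    Dop i * Hop θ j + Hop θ i * Dop j = Hop θ j * Dop i + Dop j * Hop θ i := by
  have h1 : Dop i * Hop θ j - Hop θ j * Dop i
      = Dop i * etaop θ j i - etaop θ j i * Dop i := by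
    rw [Hop, Finset.mul_sum, Finset.sum_mul, ← Finset.sum_sub_distrib]
    refine Finset.sum_eq_single_of_mem i (Finset.mem_univ i) fun k _ hk => ?_
    rw [comm_D_eta θ hθ i j k hij hk.symm, sub_self]
  have h2 : Hop θ i * Dop j - Dop j * Hop θ i
      = etaop θ i j * Dop j - Dop j * etaop θ i j := by
    rw [Hop, Finset.mul_sum, Finset.sum_mul, ← Finset.sum_sub_distrib]
    refine Finset.sum_eq_single_of_mem j (Finset.mem_univ j) fun k _ hk => ?_
    rw [comm_D_eta θ hθ j i k hij.symm hk.symm, sub_self]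
  have key : Dop i * etaop θ j i - etaop θ j i * Dop i
      + (etaop θ i j * Dop j - Dop j * etaop θ i j) = 0 := by
    have hDD := comm_DD_eta θ hθ i j hij
    rw [eta_anti θ hθ i j, mul_neg (Dop i) (etaop θ i j), neg_mul (etaop θ i j) (Dop i)]
    calc -(Dop i * etaop θ i j) - -(etaop θ i j * Dop i)
          + (etaop θ i j * Dop j - Dop j * etaop θ i j)
        = etaop θ i j * (Dop i + Dop j) - (Dop i + Dop j) * etaop θ i j := by noncomm_ring
      _ = 0 := by rw [hDD, sub_self]
  have main0 : (Dop i * Hop θ j - Hop θ j * Dop i)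
      + (Hop θ i * Dop j - Dop j * Hop θ i) = 0 := by rw [h1, h2]; exact key
  have rearr : Dop i * Hop θ j + Hop θ i * Dop j - (Hop θ j * Dop i + Dop j * Hop θ i)
      = (Dop i * Hop θ j - Hop θ j * Dop i) + (Hop θ i * Dop j - Dop j * Hop θ i) := by
    abel
  exact sub_eq_zero.mp (rearr.trans main0)

lemma P3 (i j : Fin n) (hij : i < j) : Hop θ i * Hop θ j = Hop θ j * Hop θ i := by
  have hij' : i ≠ j := hij.ne
  set c : Fin n → Fin n → (Lpoly n →ₗ[ℂ] Lpoly n) :=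
    fun k l => etaop θ i k * etaop θ j l - etaop θ j l * etaop θ i k with hc
  have expand : Hop θ i * Hop θ j - Hop θ j * Hop θ i = ∑ k, ∑ l, c k l := by
    calc Hop θ i * Hop θ j - Hop θ j * Hop θ i
        = (∑ k, ∑ l, etaop θ i k * etaop θ j l) - (∑ l, ∑ k, etaop θ j l * etaop θ i k) := by
          rw [Hop, Hop, Finset.sum_mul_sum, Finset.sum_mul_sum]
      _ = (∑ k, ∑ l, etaop θ i k * etaop θ j l) - (∑ k, ∑ l, etaop θ j l * etaop θ i k) := by
          congr 1
          exact Finset.sum_comm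
      _ = ∑ k, ∑ l, c k l := by
          rw [← Finset.sum_sub_distrib]
          exact Finset.sum_congr rfl fun k _ => (Finset.sum_sub_distrib _ _).symm
  have rowi : ∑ l, c i l = 0 := by
    refine Finset.sum_eq_zero fun l _ => ?_
    simp [hc, etaop_self]
  have rowk : ∀ k, k ≠ i → k ≠ j → ∑ l, c k l = c k i + c k k := by
    intro k hki hkj
    have hzero : ∀ l ∈ Finset.univ, l ∉ ({i, k} : Finset (Fin n)) → c k l = 0 := by
      intro l _ hl
      simp only [Finset.mem_insert, Finset.mem_singleton, not_or] at hl
      rcases eq_or_ne l j with rfl | hlj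
      · simp [hc, etaop_self]
      · show etaop θ i k * etaop θ j l - etaop θ j l * etaop θ i k = 0
        rw [comm_eta_disjoint θ hθ i k j l hij' (Ne.symm hl.1) hkj (Ne.symm hl.2), sub_self]
    have : ∑ l ∈ ({i, k} : Finset (Fin n)), c k l = ∑ l, c k l :=
      Finset.sum_subset (Finset.subset_univ _) hzero
    rw [← this, Finset.sum_pair hki.symm]
  have rowj : ∑ l, c j l = ∑ l ∈ (Finset.univ.erase i).erase j, c j l := by
    have e1 : ∑ l ∈ Finset.univ.erase i, c j l + c j i = ∑ l, c j l :=
      Finset.sum_erase_add _ _ (Finset.mem_univ i)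
    have e2 : ∑ l ∈ (Finset.univ.erase i).erase j, c j l + c j j
        = ∑ l ∈ Finset.univ.erase i, c j l :=
      Finset.sum_erase_add _ _ (Finset.mem_erase.mpr ⟨hij'.symm, Finset.mem_univ j⟩)
    have hcjj : c j j = 0 := by simp [hc, etaop_self]
    have hcji : c j i = 0 := by
      show etaop θ i j * etaop θ j i - etaop θ j i * etaop θ i j = 0
      rw [eta_anti θ hθ i j, mul_neg (etaop θ i j) (etaop θ i j),
        neg_mul (etaop θ i j) (etaop θ i j)]
      exact sub_self _
    rw [← e1, ← e2, hcjj, hcji, add_zero, add_zero]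
  have total : ∑ k, ∑ l, c k l = 0 := by
    have e1 : ∑ k ∈ Finset.univ.erase i, (∑ l, c k l) + (∑ l, c i l) = ∑ k, ∑ l, c k l :=
      Finset.sum_erase_add _ _ (Finset.mem_univ i)
    have e2 : ∑ k ∈ (Finset.univ.erase i).erase j, (∑ l, c k l) + (∑ l, c j l)
        = ∑ k ∈ Finset.univ.erase i, (∑ l, c k l) :=
      Finset.sum_erase_add _ _ (Finset.mem_erase.mpr ⟨hij'.symm, Finset.mem_univ j⟩)
    rw [← e1, rowi, add_zero, ← e2, rowj, ← Finset.sum_add_distrib]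
    refine Finset.sum_eq_zero fun k hk => ?_
    have hk' := Finset.mem_erase.mp hk
    have hki : k ≠ i := (Finset.mem_erase.mp hk'.2).1
    have hkj : k ≠ j := hk'.1
    rw [rowk k hki hkj]
    have := eta_triple θ hθ i j k hij hki.symm hkj.symm
    calc c k i + c k k + c j k
        = etaop θ i j * etaop θ j k - etaop θ j k * etaop θ i j
          + (etaop θ i k * etaop θ j i - etaop θ j i * etaop θ i k)
          + (etaop θ i k * etaop θ j k - etaop θ j k * etaop θ i k) := by
          rw [hc]; dsimp only; abel
      _ = 0 := this
  exact sub_eq_zero.mp (expand.trans total)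

omit hθ in
lemma eta_split (i k : Fin n) :
    etaop θ i k = (if i < k then θ k i else 0) - (if k < i then θ i k else 0) := by
  rcases lt_trichotomy i k with h|h|h
  · simp [etaop, h, h.asymm]
  · subst h; simp [etaop]
  · simp [etaop, h, h.asymm]

omit hθ in
lemma Hop_eq (i : Fin n) :
    Hop θ i = (∑ j ∈ Finset.univ.filter (fun j => i < j), θ j i)
      - ∑ j ∈ Finset.univ.filter (fun j => j < i), θ i j := by
  rw [Hop]
  simp only [eta_split]
  rw [Finset.sum_sub_distrib, ← Finset.sum_filter, ← Finset.sum_filter]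

omit hθ in
lemma CDop_decomp (β : ℂ) (i : Fin n) :
    CDop β θ i = (β⁻¹ • Dop i + (((n : ℂ) - (i : ℕ) - 1)) •
      (1 : Lpoly n →ₗ[ℂ] Lpoly n)) + Hop θ i := by
  rw [CDop, Hop_eq]
  simp only [Module.End.one_eq_id]
  abel

lemma mainlem (β : ℂ) (i j : Fin n) (hij : i < j) :
    (CDop β θ i).comp (CDop β θ j) = (CDop β θ j).comp (CDop β θ i) := by
  have hmul : ∀ u v : Lpoly n →ₗ[ℂ] Lpoly n, u.comp v = u * v := fun _ _ => rfl
  rw [hmul, hmul, CDop_decomp θ β i, CDop_decomp θ β j]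
  set c₁ : ℂ := ((n : ℂ) - (i : ℕ) - 1) with hc1
  set c₂ : ℂ := ((n : ℂ) - (j : ℕ) - 1) with hc2
  set A₁ := β⁻¹ • Dop i + c₁ • (1 : Lpoly n →ₗ[ℂ] Lpoly n) with hA1
  set A₂ := β⁻¹ • Dop j + c₂ • (1 : Lpoly n →ₗ[ℂ] Lpoly n) with hA2
  set B₁ := Hop θ i with hB1
  set B₂ := Hop θ j with hB2
  have key1 : A₁ * A₂ = A₂ * A₁ := by
    refine LinearMap.ext fun f => ?_
    simp only [hA1, hA2, Module.End.mul_apply, LinearMap.add_apply, LinearMap.smul_apply,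
      Module.End.one_apply, map_add, map_smul]
    rw [Dop_Dop i j f]
    module
  have key2 : A₁ * B₂ + B₁ * A₂ = B₂ * A₁ + A₂ * B₁ := by
    have hP2 := P2 θ hθ i j hij.ne
    calc A₁ * B₂ + B₁ * A₂
        = β⁻¹ • (Dop i * B₂ + B₁ * Dop j) + (c₁ • B₂ + c₂ • B₁) := by
          rw [hA1, hA2]
          simp only [add_mul, mul_add, smul_mul_assoc, mul_smul_comm, one_mul, mul_one,
            smul_add]
          abel
      _ = β⁻¹ • (B₂ * Dop i + Dop j * B₁) + (c₁ • B₂ + c₂ • B₁) := by rw [hP2]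
      _ = B₂ * A₁ + A₂ * B₁ := by
          rw [hA1, hA2]
          simp only [add_mul, mul_add, smul_mul_assoc, mul_smul_comm, one_mul, mul_one,
            smul_add]
          abel
  have key3 : B₁ * B₂ = B₂ * B₁ := P3 θ hθ i j hij
  calc (A₁ + B₁) * (A₂ + B₂)
      = A₁ * A₂ + (A₁ * B₂ + B₁ * A₂) + B₁ * B₂ := by noncomm_ring
    _ = A₂ * A₁ + (B₂ * A₁ + A₂ * B₁) + B₂ * B₁ := by rw [key1, key2, key3]
    _ = (A₂ + B₂) * (A₁ + B₁) := by noncomm_ring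

end Theta

end CDaux

/-- The Cherednik–Dunkl operators pairwise commute. -/
theorem stmt5 (n : ℕ) (β : ℂ) (hβ : β ≠ 0)
    (θ : Fin n → Fin n → (Lpoly n →ₗ[ℂ] Lpoly n))
    (hθ : ∀ i j : Fin n, i ≠ j → ∀ f : Lpoly n,
      (mono (Pi.single i 1) - mono (Pi.single j 1)) * θ i j f
        = mono (Pi.single i 1) * (Kop i j f - f)) :
    ∀ i j : Fin n, (CDop β θ i).comp (CDop β θ j) = (CDop β θ j).comp (CDop β θ i) := by
  intro i j
  have hθ' : ∀ i j : Fin n, i ≠ j → ∀ f : Lpoly n,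
      (Z i - Z j) * θ i j f = Z i * (Kop i j f - f) := hθ
  rcases lt_trichotomy i j with h|h|h
  · exact mainlem θ hθ' β i j h
  · subst h; rfl
  · exact (mainlem θ hθ' β j i h).symm

end
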